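/- Let K have characteristic zero, let d ≥ 1 and let a₁,…,a_{2d+2} ∈ Kⁿ be pairwise linearly independent vectors such that for all j ≥ min{3, d²} and all k with 3 ≤ k ≤ d+2, the set {aⱼ, a_k, a_{k+d}} consists of two or three linearly independent vectors (two if j ∈ {k, k+d}, three otherwise). If ∑_{i=1}^{2d+2} λᵢ·(aᵢᵀx)^d = 0 in K[x₁,…,xₙ] with λᵢ ∈ K not all zero, then λ₁ ≠ 0 and λ₂ ≠ 0. -/

import Mathlib

open MvPolynomial Finset

section Dev
set_option linter.unusedSectionVars false
variable {K : Type*} [Field K] [CharZero K] {n : ℕ}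

/-- dot product -/
def dotp (a b : Fin n → K) : K := ∑ t, a t * b t

/-- linear form -/
noncomputable def lin (a : Fin n → K) : MvPolynomial (Fin n) K := ∑ t, C (a t) * X t

lemma lin_coeff (a : Fin n → K) (t : Fin n) :
    (lin a).coeff (Finsupp.single t 1) = a t := by
  rw [lin]
  rw [MvPolynomial.coeff_sum]
  rw [Finset.sum_eq_single t]
  · simp [MvPolynomial.C_mul_X_eq_monomial, MvPolynomial.coeff_monomial]
  · intro s _ hs
    simp [MvPolynomial.C_mul_X_eq_monomial, MvPolynomial.coeff_monomial,
      (Finsupp.single_left_injective one_ne_zero).ne_iff.mpr hs]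
  · simp
lemma lin_eq_zero {a : Fin n → K} (h : lin a = 0) : a = 0 := by
  funext t
  have := lin_coeff a t
  rw [h] at this
  simpa using this.symm

lemma sum_C_mul_lin {T : Finset ℕ} (g : ℕ → K) (v : ℕ → Fin n → K) :
    ∑ i ∈ T, C (g i) * lin (v i) = lin (fun t => ∑ i ∈ T, g i * v i t) := by
  calc ∑ i ∈ T, C (g i) * lin (v i)
      = ∑ i ∈ T, ∑ t, C (g i * v i t) * X t := by
        simp [lin, Finset.mul_sum, mul_assoc, C_mul]
    _ = ∑ t, ∑ i ∈ T, C (g i * v i t) * X t := Finset.sum_comm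
    _ = lin (fun t => ∑ i ∈ T, g i * v i t) := by
        simp [lin, map_sum, Finset.sum_mul]

lemma deriv_lin (b : Fin n → K) (a : Fin n → K) :
    mkDerivation K (fun t => (C (b t) : MvPolynomial (Fin n) K)) (lin a) = C (dotp a b) := by
  rw [lin, map_sum, dotp, map_sum]
  refine Finset.sum_congr rfl fun t _ => ?_
  rw [Derivation.leibniz, mkDerivation_X]
  have : (mkDerivation K (fun t => (C (b t) : MvPolynomial (Fin n) K))) (C (a t)) = 0 := by
    rw [← MvPolynomial.algebraMap_eq, Derivation.map_algebraMap]
  rw [this, smul_zero, add_zero, smul_eq_mul, ← C_mul]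

lemma step (T : Finset ℕ) (v : ℕ → Fin n → K) (b : Fin n → K) (m : ℕ) (c : ℕ → K)
    (h : ∑ i ∈ T, C (c i) * lin (v i) ^ (m+1) = 0) :
    ∑ i ∈ T, C (c i * dotp (v i) b) * lin (v i) ^ m = 0 := by
  set D := mkDerivation K (fun t => (C (b t) : MvPolynomial (Fin n) K)) with hD
  have h0 : D (∑ i ∈ T, C (c i) * lin (v i) ^ (m+1)) = 0 := by rw [h, map_zero]
  rw [map_sum] at h0
  have hterm : ∀ i ∈ T, D (C (c i) * lin (v i) ^ (m+1)) =
      (m+1) • (C (c i * dotp (v i) b) * lin (v i) ^ m) := by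
    intro i _
    rw [Derivation.leibniz]
    have hC : D (C (c i)) = 0 := by
      rw [hD, ← MvPolynomial.algebraMap_eq, Derivation.map_algebraMap]
    rw [hC, smul_zero, add_zero, Derivation.leibniz_pow, hD, deriv_lin]
    rw [Nat.add_sub_cancel]
    simp only [smul_eq_mul, nsmul_eq_mul]
    rw [C_mul]
    ring
  rw [Finset.sum_congr rfl hterm, ← Finset.smul_sum] at h0
  have hm : ((m+1 : ℕ) : K) ≠ 0 := by exact_mod_cast Nat.succ_ne_zero m
  have := h0
  rw [← Nat.cast_smul_eq_nsmul K] at this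
  rcases smul_eq_zero.mp this with h' | h'
  · exact absurd h' hm
  · exact h'

lemma iter (T : Finset ℕ) (v : ℕ → Fin n → K) (b : ℕ → Fin n → K) (e : ℕ)
    (S : Finset ℕ) : ∀ (c : ℕ → K),
    (∑ i ∈ T, C (c i) * lin (v i) ^ (e + S.card)) = 0 →
    (∑ i ∈ T, C (c i * ∏ k ∈ S, dotp (v i) (b k)) * lin (v i) ^ e) = 0 := by
  classical
  induction S using Finset.induction_on with
  | empty => intro c h; simpa using h
  | insert _ _ hk =>
    rename_i k S' ih
    intro c h
    rw [Finset.card_insert_of_notMem hk] at h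
    have h1 : ∑ i ∈ T, C (c i) * lin (v i) ^ ((e + S'.card) + 1) = 0 := by
      rw [show (e + S'.card) + 1 = e + (S'.card + 1) from by ring]; exact h
    have h2 := step T v (b k) (e + S'.card) c h1
    have h3 := ih (fun i => c i * dotp (v i) (b k)) h2
    rw [← h3]
    refine Finset.sum_congr rfl fun i _ => ?_
    rw [Finset.prod_insert hk]
    ring_nf


lemma dotp_dual (z : Fin n → K) (f : (Fin n → K) →ₗ[K] K) :
    dotp z (fun t => f (Pi.single t 1)) = f z := by
  rw [dotp]
  have : z = ∑ t, Pi.single t (z t) := (Finset.univ_sum_single z).symm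
  conv_rhs => rw [this]
  rw [map_sum]
  refine Finset.sum_congr rfl fun t _ => ?_
  have : (Pi.single t (z t) : Fin n → K) = z t • (Pi.single t 1 : Fin n → K) := by
    funext s
    by_cases hs : s = t <;> simp [Pi.single_apply, hs]
  rw [this, map_smul, smul_eq_mul]

lemma exists_dual {u v z : Fin n → K} (hz : z ∉ Submodule.span K {u, v}) :
    ∃ f : (Fin n → K) →ₗ[K] K, f u = 0 ∧ f v = 0 ∧ f z ≠ 0 := by
  obtain ⟨f, hfz, hmap⟩ := Submodule.exists_dual_map_eq_bot_of_notMem hz inferInstance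
  refine ⟨f, ?_, ?_, hfz⟩
  · have hu : u ∈ Submodule.span K {u, v} := Submodule.subset_span (by simp)
    have := Submodule.mem_map_of_mem (f := f) hu
    rw [hmap] at this
    simpa using this
  · have hv : v ∈ Submodule.span K {u, v} := Submodule.subset_span (by simp)
    have := Submodule.mem_map_of_mem (f := f) hv
    rw [hmap] at this
    simpa using this

lemma avoid2 {u v z₁ z₂ : Fin n → K} (h₁ : z₁ ∉ Submodule.span K {u, v})
    (h₂ : z₂ ∉ Submodule.span K {u, v}) :
    ∃ b : Fin n → K, dotp u b = 0 ∧ dotp v b = 0 ∧ dotp z₁ b ≠ 0 ∧ dotp z₂ b ≠ 0 := by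
  classical
  obtain ⟨f₁, hf₁u, hf₁v, hf₁z⟩ := exists_dual h₁
  obtain ⟨f₂, hf₂u, hf₂v, hf₂z⟩ := exists_dual h₂
  obtain ⟨c, hc⟩ := Infinite.exists_notMem_finset
    ({-(f₁ z₁) / f₂ z₁, -(f₁ z₂) / f₂ z₂} : Finset K)
  simp only [Finset.mem_insert, Finset.mem_singleton, not_or] at hc
  set f : (Fin n → K) →ₗ[K] K := f₁ + c • f₂ with hf
  have hfz₁ : f z₁ ≠ 0 := by
    simp only [hf, LinearMap.add_apply, LinearMap.smul_apply, smul_eq_mul]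
    by_cases h : f₂ z₁ = 0
    · simpa [h] using hf₁z
    · intro hcontra
      apply hc.1
      rw [eq_div_iff h]
      linear_combination hcontra
  have hfz₂ : f z₂ ≠ 0 := by
    simp only [hf, LinearMap.add_apply, LinearMap.smul_apply, smul_eq_mul]
    intro hcontra
    apply hc.2
    rw [eq_div_iff hf₂z]
    linear_combination hcontra
  refine ⟨fun t => f (Pi.single t 1), ?_, ?_, ?_, ?_⟩ <;> rw [dotp_dual]
  · simp [hf, hf₁u, hf₂u]
  · simp [hf, hf₁v, hf₂v]
  · exact hfz₁
  · exact hfz₂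


lemma dotp_lin_comb (α β : K) (u v b : Fin n → K) :
    dotp (α • u + β • v) b = α * dotp u b + β * dotp v b := by
  simp [dotp, Finset.mul_sum, ← Finset.sum_add_distrib, add_mul, mul_assoc]

lemma pair_zero {x y : Fin n → K} (h : LinearIndependent K ![x, y]) {s t : K}
    (hst : s • x + t • y = 0) : s = 0 ∧ t = 0 :=
  LinearIndependent.pair_iff.mp h s t hst

lemma pair_not_smul {x y : Fin n → K} (h : LinearIndependent K ![x, y]) (c : K) :
    x ≠ c • y := by
  intro hx
  have : (1 : K) • x + (-c) • y = 0 := by rw [hx]; module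
  exact one_ne_zero (pair_zero h this).1

lemma pair_not_mem_span_singleton {x y : Fin n → K} (h : LinearIndependent K ![x, y]) :
    x ∉ Submodule.span K {y, y} := by
  intro hx
  rw [Set.pair_eq_singleton, Submodule.mem_span_singleton] at hx
  obtain ⟨c, hc⟩ := hx
  exact pair_not_smul h c hc.symm

lemma triple_not_mem_span {x y z : Fin n → K} (h : LinearIndependent K ![z, x, y]) :
    z ∉ Submodule.span K {x, y} := by
  intro hm
  rw [Submodule.mem_span_pair] at hm
  obtain ⟨cx, cy, hc⟩ := hm
  have h3 := Fintype.linearIndependent_iff.mp h ![(-1 : K), cx, cy]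
  have hz : ∑ i, (![(-1 : K), cx, cy]) i • (![z, x, y]) i = 0 := by
    simp [Fin.sum_univ_three]
    rw [← hc]
    module
  have := h3 hz 0
  simp at this

lemma exists_dual_one {x y : Fin n → K} (h : LinearIndependent K ![x, y]) :
    ∃ b : Fin n → K, dotp x b = 1 ∧ dotp y b = 0 := by
  obtain ⟨f, hfy, _, hfx⟩ := exists_dual (pair_not_mem_span_singleton h)
  refine ⟨fun t => ((f x)⁻¹ • f) (Pi.single t 1), ?_, ?_⟩
  · rw [dotp_dual]
    simp [inv_mul_cancel₀ hfx]
  · rw [dotp_dual]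
    simp [hfy]

lemma lin_aeval (pb qb : Fin n → K) (z : Fin n → K) :
    aeval (fun t => Polynomial.C (pb t) * Polynomial.X + Polynomial.C (qb t)) (lin z) =
      Polynomial.C (dotp z pb) * Polynomial.X + Polynomial.C (dotp z qb) := by
  rw [lin, map_sum, dotp, dotp]
  simp only [map_mul, aeval_C, aeval_X, Polynomial.algebraMap_eq]
  calc ∑ t, Polynomial.C (z t) * (Polynomial.C (pb t) * Polynomial.X + Polynomial.C (qb t))
      = ∑ t, (Polynomial.C (z t * pb t) * Polynomial.X + Polynomial.C (z t * qb t)) := by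
        refine Finset.sum_congr rfl fun t _ => ?_
        rw [mul_add, ← mul_assoc, ← Polynomial.C_mul, ← Polynomial.C_mul]
    _ = _ := by
        rw [Finset.sum_add_distrib, ← Finset.sum_mul, ← map_sum Polynomial.C, ← map_sum Polynomial.C]

lemma binom_three (d : ℕ) (hd : 2 ≤ d) (u v w : Fin n → K)
    (huv : LinearIndependent K ![u, v]) (hvu : LinearIndependent K ![v, u])
    (α β : K) (hα : α ≠ 0) (hβ : β ≠ 0) (hw : w = α • u + β • v) (μ lu lv : K)
    (h : C μ * lin w ^ d + (C lu * lin u ^ d + C lv * lin v ^ d) = 0) :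
    μ = 0 ∧ lu = 0 ∧ lv = 0 := by
  obtain ⟨pb, hpu, hpv⟩ := exists_dual_one huv
  obtain ⟨qb, hqv, hqu⟩ := exists_dual_one hvu
  set φ := aeval (R := K) (fun t => Polynomial.C (pb t) * Polynomial.X + Polynomial.C (qb t))
  have hφ := congrArg φ h
  rw [map_add, map_add, map_mul, map_mul, map_mul, map_pow, map_pow, map_pow, map_zero] at hφ
  rw [lin_aeval, lin_aeval, lin_aeval] at hφ
  rw [hpu, hpv, hqu, hqv, hw, dotp_lin_comb, dotp_lin_comb] at hφ
  rw [hpu, hpv, hqu, hqv] at hφ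
  simp only [algHom_C, Polynomial.algebraMap_eq, mul_one, mul_zero, add_zero, zero_add,
    Polynomial.C_0, Polynomial.C_1, zero_mul, one_mul] at hφ
  -- hφ : Polynomial.C μ * (Polynomial.C α * X + Polynomial.C β)^d
  --      + (Polynomial.C lu * X^d + Polynomial.C lv * 1^d) = 0
  have key : (Polynomial.C α * Polynomial.X + Polynomial.C β : Polynomial K) =
      Polynomial.C α * (Polynomial.X + Polynomial.C (β / α)) := by
    rw [mul_add, ← Polynomial.C_mul, mul_div_cancel₀ _ hα]
  have hμ : μ = 0 := by
    have hco := congrArg (Polynomial.coeff · (d - 1)) hφ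
    simp only [Polynomial.coeff_add, Polynomial.coeff_zero] at hco
    rw [key, mul_pow, ← Polynomial.C_pow, ← mul_assoc, ← Polynomial.C_mul] at hco
    simp only [Polynomial.coeff_C_mul, Polynomial.coeff_X_add_C_pow, Polynomial.coeff_X_pow,
      one_pow, Polynomial.coeff_one,
      if_neg (show ¬ (d - 1 = d) by omega), if_neg (show ¬ (d - 1 = 0) by omega),
      mul_zero, add_zero] at hco
    have h1 : d - (d - 1) = 1 := by omega
    have h2 : d.choose (d - 1) = d := by
      have := Nat.choose_symm (show 1 ≤ d by omega) (n := d)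
      rw [this, Nat.choose_one_right]
    rw [h1, h2, pow_one] at hco
    rcases mul_eq_zero.mp hco with h' | h'
    · rcases mul_eq_zero.mp h' with h'' | h''
      · exact h''
      · exact absurd h'' (pow_ne_zero _ hα)
    · exfalso
      rcases mul_eq_zero.mp h' with h'' | h''
      · exact div_ne_zero hβ hα h''
      · exact Nat.cast_ne_zero.mpr (show d ≠ 0 by omega) h''
  subst hμ
  simp only [Polynomial.C_0, zero_mul, zero_add] at hφ
  have hlu : lu = 0 := by
    have hco := congrArg (Polynomial.coeff · d) hφ
    simp [Polynomial.coeff_one, Polynomial.coeff_C, Polynomial.coeff_X_pow,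
      show ¬ (d = 0) by omega] at hco
    exact hco
  have hlv : lv = 0 := by
    have hco := congrArg (Polynomial.coeff · 0) hφ
    simp [Polynomial.coeff_one, Polynomial.coeff_C, Polynomial.coeff_X_pow,
      show ¬ ((0:ℕ) = d) by omega] at hco
    exact hco
  exact ⟨rfl, hlu, hlv⟩


lemma lin_add (x y : Fin n → K) : lin (x + y) = lin x + lin y := by
  simp [lin, add_mul, Finset.sum_add_distrib]

lemma lin_smul (a : K) (x : Fin n → K) : lin (a • x) = C a * lin x := by
  simp [lin, Finset.mul_sum, C_mul, mul_assoc]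

lemma pair_symm {x y : Fin n → K} (h : LinearIndependent K ![x, y]) :
    LinearIndependent K ![y, x] := by
  rw [LinearIndependent.pair_iff] at h ⊢
  intro s t hst
  rw [add_comm] at hst
  exact ⟨(h t s hst).2, (h t s hst).1⟩

lemma pair_left_ne_zero {x y : Fin n → K} (h : LinearIndependent K ![x, y]) : x ≠ 0 := by
  intro h0
  have : (1 : K) • x + (0 : K) • y = 0 := by rw [h0]; module
  exact one_ne_zero (pair_zero h this).1

lemma key (d : ℕ) (hd : 2 ≤ d) (A : ℕ → Fin n → K) (w : Fin n → K)
    (hpw : ∀ i ∈ Icc 3 (2*d+2), LinearIndependent K ![w, A i])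
    (hpk : ∀ k ∈ Icc 3 (d+2), LinearIndependent K ![A k, A (k+d)])
    (htr : ∀ k ∈ Icc 3 (d+2), ∀ j ∈ Icc 3 (2*d+2), j ≠ k → j ≠ k+d →
      A j ∉ Submodule.span K {A k, A (k+d)})
    (μ : K) (c : ℕ → K)
    (hsum : C μ * lin w ^ d + ∑ i ∈ Icc 3 (2*d+2), C (c i) * lin (A i) ^ d = 0) :
    μ = 0 ∧ ∀ i ∈ Icc 3 (2*d+2), c i = 0 := by
  classical
  set B : ℕ → Fin n → K := fun i => if i = 2 then w else A i with hB
  set c' : ℕ → K := fun i => if i = 2 then μ else c i with hc'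
  set T : Finset ℕ := insert 2 (Icc 3 (2*d+2)) with hT
  have h2T : (2 : ℕ) ∉ Icc 3 (2*d+2) := by simp
  have hsum' : ∑ i ∈ T, C (c' i) * lin (B i) ^ d = 0 := by
    rw [hT, Finset.sum_insert h2T]
    have hB2 : B 2 = w := by simp [hB]
    have hc2 : c' 2 = μ := by simp [hc']
    have hcong : ∑ i ∈ Icc 3 (2*d+2), C (c' i) * lin (B i) ^ d =
        ∑ i ∈ Icc 3 (2*d+2), C (c i) * lin (A i) ^ d :=
      Finset.sum_congr rfl (fun i hi => by
        rw [mem_Icc] at hi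
        simp [hB, hc', show i ≠ 2 by omega])
    rw [hB2, hc2, hcong]
    exact hsum
  have hcard : (Icc 3 (d+2)).card = d := by
    rw [Nat.card_Icc]
    omega
  -- generic coefficient-vanishing for paired indices
  have hpairzero : ∀ (S : Finset ℕ) (b : ℕ → Fin n → K),
      (∀ k ∈ S, dotp (A k) (b k) = 0 ∧ dotp (A (k+d)) (b k) = 0) →
      ∀ i ∈ Icc 3 (2*d+2), (∀ k ∈ Icc 3 (d+2), k ∉ S → i ≠ k ∧ i ≠ k + d) →
      ∏ k ∈ S, dotp (B i) (b k) = 0 := by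
    intro S b hb i hi hout
    rw [mem_Icc] at hi
    have hBi : B i = A i := by simp [hB, show i ≠ 2 by omega]
    set k : ℕ := if i ≤ d+2 then i else i - d with hk
    have hkIcc : k ∈ Icc 3 (d+2) := by
      rw [mem_Icc, hk]; split <;> omega
    have hkS : k ∈ S := by
      by_contra hkS
      have := hout k hkIcc hkS
      rw [hk] at this
      split at this <;> omega
    refine Finset.prod_eq_zero hkS ?_
    rw [hBi]
    by_cases hle : i ≤ d+2
    · rw [show k = i from by rw [hk]; simp [hle]] at hkS ⊢
      exact (hb i hkS).1
    · have hik : i = k + d := by rw [hk]; split <;> omega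
      rw [hik]
      exact (hb k hkS).2
  -- KILL: pair k₀ coefficients vanish
  have KILL : ∀ k₀ ∈ Icc 3 (d+2), ∀ b : ℕ → Fin n → K,
      (∀ k ∈ (Icc 3 (d+2)).erase k₀, dotp (A k) (b k) = 0 ∧ dotp (A (k+d)) (b k) = 0 ∧
        dotp (A k₀) (b k) ≠ 0 ∧ dotp (A (k₀+d)) (b k) ≠ 0) →
      (μ * ∏ k ∈ (Icc 3 (d+2)).erase k₀, dotp w (b k) = 0) →
      c k₀ = 0 ∧ c (k₀+d) = 0 := by
    intro k₀ hk₀ b hb hw0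
    rw [mem_Icc] at hk₀
    set S : Finset ℕ := (Icc 3 (d+2)).erase k₀ with hS
    have hScard : S.card = d - 1 := by
      rw [hS, Finset.card_erase_of_mem (by rw [mem_Icc]; omega), hcard]
    have hiter := iter T B b 1 S c' (by
      rw [show 1 + S.card = d from by omega]
      exact hsum')
    simp only [pow_one] at hiter
    have hzero : ∀ i ∈ T, i ∉ ({k₀, k₀ + d} : Finset ℕ) →
        C (c' i * ∏ k ∈ S, dotp (B i) (b k)) * lin (B i) = 0 := by
      intro i hiT hinot
      simp only [Finset.mem_insert, Finset.mem_singleton] at hinot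
      push_neg at hinot
      rw [hT, Finset.mem_insert] at hiT
      rcases hiT with h2 | hIcc
      · subst h2
        have hc2 : c' 2 = μ := by simp [hc']
        have hB2 : B 2 = w := by simp [hB]
        rw [hc2, hB2, hw0, map_zero, zero_mul]
      · have hprod : ∏ k ∈ S, dotp (B i) (b k) = 0 := by
          refine hpairzero S b (fun k hk => ⟨(hb k hk).1, (hb k hk).2.1⟩) i hIcc
            (fun k hkIcc hkS => ?_)
          rw [hS, Finset.mem_erase] at hkS
          push_neg at hkS
          have hkk₀ : k = k₀ := by
            by_contra hne
            exact (hkS hne) hkIcc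
          rw [hkk₀]
          exact hinot
        rw [hprod, mul_zero, map_zero, zero_mul]
    have hsub : ({k₀, k₀ + d} : Finset ℕ) ⊆ T := by
      intro x hx
      simp only [Finset.mem_insert, Finset.mem_singleton] at hx
      rw [hT, Finset.mem_insert, mem_Icc]
      rcases hx with h | h <;> omega
    have hred : ∑ i ∈ ({k₀, k₀ + d} : Finset ℕ),
        C (c' i * ∏ k ∈ S, dotp (B i) (b k)) * lin (B i) = 0 :=
      (Finset.sum_subset hsub hzero).trans hiter
    rw [Finset.sum_pair (show k₀ ≠ k₀ + d by omega)] at hred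
    have hBk₀ : B k₀ = A k₀ := by simp [hB, show k₀ ≠ 2 by omega]
    have hBk₀d : B (k₀+d) = A (k₀+d) := by simp [hB, show k₀+d ≠ 2 by omega]
    rw [hBk₀, hBk₀d, ← lin_smul, ← lin_smul, ← lin_add] at hred
    have hvec := lin_eq_zero hred
    have hgz := pair_zero (hpk k₀ (by rw [mem_Icc]; omega)) hvec
    constructor
    · rcases mul_eq_zero.mp hgz.1 with h | h
      · simpa [hc', show k₀ ≠ 2 by omega] using h
      · exact absurd h (Finset.prod_ne_zero_iff.mpr (fun k hk => (hb k hk).2.2.1))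
    · rcases mul_eq_zero.mp hgz.2 with h | h
      · simpa [hc', show k₀ + d ≠ 2 by omega] using h
      · exact absurd h (Finset.prod_ne_zero_iff.mpr (fun k hk => (hb k hk).2.2.2))
  have KILL0 : ∀ b : ℕ → Fin n → K,
      (∀ k ∈ Icc 3 (d+2), dotp (A k) (b k) = 0 ∧ dotp (A (k+d)) (b k) = 0 ∧ dotp w (b k) ≠ 0) →
      μ = 0 := by
    intro b hb
    have hiter := iter T B b 0 (Icc 3 (d+2)) c' (by
      rw [show 0 + (Icc 3 (d+2)).card = d from by omega]
      exact hsum')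
    simp only [pow_zero, mul_one] at hiter
    rw [← map_sum, MvPolynomial.C_eq_zero] at hiter
    have hzero : ∀ i ∈ T, i ∉ ({2} : Finset ℕ) →
        c' i * ∏ k ∈ Icc 3 (d+2), dotp (B i) (b k) = 0 := by
      intro i hiT hinot
      rw [Finset.mem_singleton] at hinot
      rw [hT, Finset.mem_insert] at hiT
      rcases hiT with h2 | hIcc
      · exact absurd h2 hinot
      · have hprod := hpairzero (Icc 3 (d+2)) b (fun k hk => ⟨(hb k hk).1, (hb k hk).2.1⟩) i hIcc
          (fun k hkIcc hkS => absurd hkIcc hkS)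
        rw [hprod, mul_zero]
    have hsub : ({2} : Finset ℕ) ⊆ T := by
      intro x hx
      rw [Finset.mem_singleton] at hx
      rw [hT, Finset.mem_insert]
      left; exact hx
    have hred := (Finset.sum_subset hsub hzero).trans hiter
    rw [Finset.sum_singleton] at hred
    have hB2 : B 2 = w := by simp [hB]
    have hc2 : c' 2 = μ := by simp [hc']
    rw [hB2, hc2] at hred
    rcases mul_eq_zero.mp hred with h | h
    · exact h
    · exact absurd h (Finset.prod_ne_zero_iff.mpr (fun k hk => (hb k hk).2.2))
  have hbex : ∀ k₀ ∈ Icc 3 (d+2), ∀ k ∈ (Icc 3 (d+2)).erase k₀, ∃ bk : Fin n → K,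
      dotp (A k) bk = 0 ∧ dotp (A (k+d)) bk = 0 ∧ dotp (A k₀) bk ≠ 0 ∧ dotp (A (k₀+d)) bk ≠ 0 := by
    intro k₀ hk₀ k hk
    rw [mem_Icc] at hk₀
    rw [Finset.mem_erase, mem_Icc] at hk
    have h1 : A k₀ ∉ Submodule.span K {A k, A (k+d)} :=
      htr k (mem_Icc.mpr ⟨hk.2.1, hk.2.2⟩) k₀ (mem_Icc.mpr (by omega)) (fun h => hk.1 h.symm)
        (by omega)
    have h2 : A (k₀+d) ∉ Submodule.span K {A k, A (k+d)} :=
      htr k (mem_Icc.mpr ⟨hk.2.1, hk.2.2⟩) (k₀+d) (mem_Icc.mpr (by omega)) (by omega)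
        (by omega)
    exact avoid2 h1 h2
  have pairs_to_all : (∀ k ∈ Icc 3 (d+2), c k = 0 ∧ c (k+d) = 0) →
      ∀ i ∈ Icc 3 (2*d+2), c i = 0 := by
    intro h i hi
    rw [mem_Icc] at hi
    by_cases hle : i ≤ d+2
    · exact (h i (mem_Icc.mpr ⟨hi.1, hle⟩)).1
    · have h2 := (h (i-d) (mem_Icc.mpr ⟨by omega, by omega⟩)).2
      rwa [show i - d + d = i from by omega] at h2
  set P : Finset ℕ := (Icc 3 (d+2)).filter
    (fun k => w ∈ Submodule.span K {A k, A (k+d)}) with hP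
  by_cases hPne : P.Nonempty
  · by_cases hP2 : ∃ k₁ ∈ P, ∃ k₂ ∈ P, k₁ ≠ k₂
    · obtain ⟨k₁, hk₁, k₂, hk₂, hne⟩ := hP2
      have hall : ∀ k₀ ∈ Icc 3 (d+2), c k₀ = 0 ∧ c (k₀+d) = 0 := by
        intro k₀ hk₀
        choose! b hb using hbex k₀ hk₀
        set k' : ℕ := if k₁ = k₀ then k₂ else k₁ with hk'
        have hk'P : k' ∈ P := by rw [hk']; split <;> assumption
        have hk'ne : k' ≠ k₀ := by
          by_cases hcase : k₁ = k₀
          · rw [hk', if_pos hcase, ← hcase]; exact Ne.symm hne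
          · rw [hk', if_neg hcase]; exact hcase
        have hk'Icc : k' ∈ Icc 3 (d+2) := by
          have := hk'P; rw [hP, Finset.mem_filter] at this; exact this.1
        have hk'span : w ∈ Submodule.span K {A k', A (k'+d)} := by
          have := hk'P; rw [hP, Finset.mem_filter] at this; exact this.2
        have hk'S : k' ∈ (Icc 3 (d+2)).erase k₀ := Finset.mem_erase.mpr ⟨hk'ne, hk'Icc⟩
        apply KILL k₀ hk₀ b hb
        obtain ⟨α, β, hw'⟩ := Submodule.mem_span_pair.mp hk'span
        have hdot : dotp w (b k') = 0 := by
          rw [← hw', dotp_lin_comb, (hb k' hk'S).1, (hb k' hk'S).2.1, mul_zero, mul_zero,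
            add_zero]
        rw [Finset.prod_eq_zero hk'S hdot, mul_zero]
      have hcz := pairs_to_all hall
      have hzsum : ∑ i ∈ Icc 3 (2*d+2), C (c i) * lin (A i) ^ d = 0 :=
        Finset.sum_eq_zero (fun i hi => by rw [hcz i hi, map_zero, zero_mul])
      rw [hzsum, add_zero] at hsum
      have hw0 : lin w ≠ 0 := fun hlw =>
        pair_left_ne_zero (hpw 3 (mem_Icc.mpr ⟨le_refl 3, by omega⟩)) (lin_eq_zero hlw)
      rcases mul_eq_zero.mp hsum with h | h
      · exact ⟨by rwa [MvPolynomial.C_eq_zero] at h, hcz⟩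
      · exact absurd h (pow_ne_zero _ hw0)
    · push_neg at hP2
      obtain ⟨k₁, hk₁⟩ := hPne
      have hk₁Icc : k₁ ∈ Icc 3 (d+2) := by
        have := hk₁; rw [hP, Finset.mem_filter] at this; exact this.1
      have hk₁span : w ∈ Submodule.span K {A k₁, A (k₁+d)} := by
        have := hk₁; rw [hP, Finset.mem_filter] at this; exact this.2
      have hk₁b : 3 ≤ k₁ ∧ k₁ ≤ d + 2 := mem_Icc.mp hk₁Icc
      have hall : ∀ k₀ ∈ Icc 3 (d+2), k₀ ≠ k₁ → c k₀ = 0 ∧ c (k₀+d) = 0 := by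
        intro k₀ hk₀ hk₀ne
        choose! b hb using hbex k₀ hk₀
        apply KILL k₀ hk₀ b hb
        have hk₁S : k₁ ∈ (Icc 3 (d+2)).erase k₀ :=
          Finset.mem_erase.mpr ⟨Ne.symm hk₀ne, hk₁Icc⟩
        obtain ⟨α, β, hw'⟩ := Submodule.mem_span_pair.mp hk₁span
        have hdot : dotp w (b k₁) = 0 := by
          rw [← hw', dotp_lin_comb, (hb k₁ hk₁S).1, (hb k₁ hk₁S).2.1, mul_zero, mul_zero,
            add_zero]
        rw [Finset.prod_eq_zero hk₁S hdot, mul_zero]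
      have hz : ∀ i ∈ Icc 3 (2*d+2), i ≠ k₁ → i ≠ k₁ + d → c i = 0 := by
        intro i hi hne1 hne2
        rw [mem_Icc] at hi
        by_cases hle : i ≤ d+2
        · exact (hall i (mem_Icc.mpr ⟨hi.1, hle⟩) hne1).1
        · have hidIcc : i - d ∈ Icc 3 (d+2) := mem_Icc.mpr ⟨by omega, by omega⟩
          have hidne : i - d ≠ k₁ := by omega
          have h2 := (hall (i-d) hidIcc hidne).2
          rwa [show i - d + d = i from by omega] at h2
      have hsubp : ({k₁, k₁ + d} : Finset ℕ) ⊆ Icc 3 (2*d+2) := by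
        intro x hx
        simp only [Finset.mem_insert, Finset.mem_singleton] at hx
        rw [mem_Icc]
        rcases hx with h | h <;> omega
      have hredsum : ∑ i ∈ ({k₁, k₁+d} : Finset ℕ), C (c i) * lin (A i) ^ d =
          ∑ i ∈ Icc 3 (2*d+2), C (c i) * lin (A i) ^ d :=
        Finset.sum_subset hsubp (fun i hi hni => by
          simp only [Finset.mem_insert, Finset.mem_singleton] at hni
          push_neg at hni
          rw [hz i hi hni.1 hni.2, map_zero, zero_mul])
      rw [← hredsum, Finset.sum_pair (show k₁ ≠ k₁ + d by omega)] at hsum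
      obtain ⟨α, β, hw'⟩ := Submodule.mem_span_pair.mp hk₁span
      have hpair₁ := hpk k₁ hk₁Icc
      have hwk := hpw k₁ (mem_Icc.mpr (by omega))
      have hwkd := hpw (k₁+d) (mem_Icc.mpr (by omega))
      have hαne : α ≠ 0 := fun h0 =>
        pair_not_smul hwkd β (by rw [← hw', h0, zero_smul, zero_add])
      have hβne : β ≠ 0 := fun h0 =>
        pair_not_smul hwk α (by rw [← hw', h0, zero_smul, add_zero])
      have hb3 := binom_three d hd (A k₁) (A (k₁+d)) w hpair₁ (pair_symm hpair₁) α β hαne hβne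
        hw'.symm μ (c k₁) (c (k₁+d)) hsum
      refine ⟨hb3.1, fun i hi => ?_⟩
      by_cases h1 : i = k₁
      · rw [h1]; exact hb3.2.1
      by_cases h2 : i = k₁ + d
      · rw [h2]; exact hb3.2.2
      exact hz i hi h1 h2
  · have hwnot : ∀ k ∈ Icc 3 (d+2), w ∉ Submodule.span K {A k, A (k+d)} := by
      intro k hk hmem
      exact hPne ⟨k, by rw [hP, Finset.mem_filter]; exact ⟨hk, hmem⟩⟩
    have hbex0 : ∀ k ∈ Icc 3 (d+2), ∃ bk : Fin n → K,
        dotp (A k) bk = 0 ∧ dotp (A (k+d)) bk = 0 ∧ dotp w bk ≠ 0 := by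
      intro k hk
      obtain ⟨bk, h1, h2, h3, _⟩ := avoid2 (hwnot k hk) (hwnot k hk)
      exact ⟨bk, h1, h2, h3⟩
    choose! b0 hb0 using hbex0
    have hμ : μ = 0 := KILL0 b0 hb0
    have hall : ∀ k₀ ∈ Icc 3 (d+2), c k₀ = 0 ∧ c (k₀+d) = 0 := by
      intro k₀ hk₀
      choose! b hb using hbex k₀ hk₀
      apply KILL k₀ hk₀ b hb
      rw [hμ, zero_mul]
    exact ⟨hμ, pairs_to_all hall⟩


lemma triple_zero {x y z : Fin n → K} (h : LinearIndependent K ![x, y, z]) {s t u : K}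
    (hst : s • x + t • y + u • z = 0) : s = 0 ∧ t = 0 ∧ u = 0 := by
  have h3 := Fintype.linearIndependent_iff.mp h ![s, t, u]
  have hz : ∑ i, (![s, t, u]) i • (![x, y, z]) i = 0 := by
    simpa [Fin.sum_univ_three] using hst
  exact ⟨by simpa using h3 hz 0, by simpa using h3 hz 1, by simpa using h3 hz 2⟩

end Dev

open MvPolynomial Finset in
theorem stmt12' (K : Type*) [Field K] [CharZero K] (n d : ℕ) (hd : 1 ≤ d)
    (a : ℕ → Fin n → K)
    (hpair : ∀ i ∈ Icc 1 (2 * d + 2), ∀ j ∈ Icc 1 (2 * d + 2), i ≠ j →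
      LinearIndependent K ![a i, a j])
    (htriple : ∀ j ∈ Icc (min 3 (d ^ 2)) (2 * d + 2), ∀ k ∈ Icc 3 (d + 2),
      ((j = k ∨ j = k + d) → LinearIndependent K ![a k, a (k + d)]) ∧
      ((j ≠ k ∧ j ≠ k + d) → LinearIndependent K ![a j, a k, a (k + d)]))
    (l : ℕ → K)
    (hsum : ∑ i ∈ Icc 1 (2 * d + 2), C (l i) * (∑ t, C (a i t) * X t) ^ d =
      (0 : MvPolynomial (Fin n) K))
    (hnz : ∃ i ∈ Icc 1 (2 * d + 2), l i ≠ 0) :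
    l 1 ≠ 0 ∧ l 2 ≠ 0 := by
  have hsum0 : ∑ i ∈ Icc 1 (2 * d + 2), C (l i) * lin (a i) ^ d = 0 := hsum
  clear hsum
  rcases Nat.lt_or_ge d 2 with hd1 | hd2
  · -- d = 1
    have hde : d = 1 := by omega
    subst hde
    have hsplit : Icc 1 (2 * 1 + 2) = insert 1 (insert 2 (insert 3 {4})) := by
      ext x
      simp [mem_Icc]
      omega
    rw [hsplit, Finset.sum_insert (by decide), Finset.sum_insert (by decide),
      Finset.sum_insert (by decide), Finset.sum_singleton] at hsum0
    simp only [pow_one] at hsum0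
    rw [← lin_smul, ← lin_smul, ← lin_smul, ← lin_smul, ← lin_add, ← lin_add,
      ← lin_add] at hsum0
    have hv := lin_eq_zero hsum0
    have hnz4 : l 1 ≠ 0 ∨ l 2 ≠ 0 ∨ l 3 ≠ 0 ∨ l 4 ≠ 0 := by
      obtain ⟨i, hi, hne⟩ := hnz
      rw [mem_Icc] at hi
      have : i = 1 ∨ i = 2 ∨ i = 3 ∨ i = 4 := by omega
      rcases this with h | h | h | h <;> rw [h] at hne <;> tauto
    constructor
    · intro h1
      rw [h1, zero_smul, zero_add] at hv
      have ht : LinearIndependent K ![a 2, a 3, a 4] := by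
        have := (htriple 2 (by rw [mem_Icc]; constructor <;> norm_num) 3
          (by rw [mem_Icc]; omega)).2 ⟨by omega, by omega⟩
        simpa using this
      have := triple_zero ht (by rw [add_assoc]; exact hv)
      rcases hnz4 with h | h | h | h
      · exact h h1
      · exact h this.1
      · exact h this.2.1
      · exact h this.2.2
    · intro h2
      rw [h2, zero_smul, zero_add] at hv
      have ht : LinearIndependent K ![a 1, a 3, a 4] := by
        have := (htriple 1 (by rw [mem_Icc]; constructor <;> norm_num) 3
          (by rw [mem_Icc]; omega)).2 ⟨by omega, by omega⟩
        simpa using this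
      have := triple_zero ht (by rw [add_assoc]; exact hv)
      rcases hnz4 with h | h | h | h
      · exact h this.1
      · exact h h2
      · exact h this.2.1
      · exact h this.2.2
  · -- d ≥ 2
    have hsplit : Icc 1 (2 * d + 2) = insert 1 (insert 2 (Icc 3 (2 * d + 2))) := by
      ext x
      simp [mem_Icc]
      omega
    have h1mem : (1 : ℕ) ∉ insert 2 (Icc 3 (2 * d + 2)) := by simp
    have h2mem : (2 : ℕ) ∉ Icc 3 (2 * d + 2) := by simp
    rw [hsplit, Finset.sum_insert h1mem, Finset.sum_insert h2mem] at hsum0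
    have hpk : ∀ k ∈ Icc 3 (d + 2), LinearIndependent K ![a k, a (k + d)] := by
      intro k hk
      rw [mem_Icc] at hk
      exact (htriple k (mem_Icc.mpr ⟨le_trans (min_le_left 3 (d ^ 2)) hk.1, by omega⟩) k
        (mem_Icc.mpr hk)).1 (Or.inl rfl)
    have htr : ∀ k ∈ Icc 3 (d + 2), ∀ j ∈ Icc 3 (2 * d + 2), j ≠ k → j ≠ k + d →
        a j ∉ Submodule.span K {a k, a (k + d)} := by
      intro k hk j hj hjk hjkd
      rw [mem_Icc] at hj
      exact triple_not_mem_span ((htriple j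
        (mem_Icc.mpr ⟨le_trans (min_le_left 3 (d ^ 2)) hj.1, hj.2⟩) k hk).2 ⟨hjk, hjkd⟩)
    constructor
    · intro h1
      rw [h1, map_zero, zero_mul, zero_add] at hsum0
      have hpw : ∀ i ∈ Icc 3 (2 * d + 2), LinearIndependent K ![a 2, a i] := by
        intro i hi
        rw [mem_Icc] at hi
        exact hpair 2 (mem_Icc.mpr (by omega)) i (mem_Icc.mpr (by omega)) (by omega)
      obtain ⟨hμ0, hall⟩ := key d hd2 a (a 2) hpw hpk htr (l 2) l hsum0
      obtain ⟨i, hi, hne⟩ := hnz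
      rw [mem_Icc] at hi
      have : i = 1 ∨ i = 2 ∨ (3 ≤ i ∧ i ≤ 2 * d + 2) := by omega
      rcases this with h | h | h
      · exact hne (h ▸ h1)
      · exact hne (h ▸ hμ0)
      · exact hne (hall i (mem_Icc.mpr h))
    · intro h2
      rw [h2, map_zero, zero_mul, zero_add] at hsum0
      have hpw : ∀ i ∈ Icc 3 (2 * d + 2), LinearIndependent K ![a 1, a i] := by
        intro i hi
        rw [mem_Icc] at hi
        exact hpair 1 (mem_Icc.mpr (by omega)) i (mem_Icc.mpr (by omega)) (by omega)
      obtain ⟨hμ0, hall⟩ := key d hd2 a (a 1) hpw hpk htr (l 1) l hsum0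
      obtain ⟨i, hi, hne⟩ := hnz
      rw [mem_Icc] at hi
      have : i = 1 ∨ i = 2 ∨ (3 ≤ i ∧ i ≤ 2 * d + 2) := by omega
      rcases this with h | h | h
      · exact hne (h ▸ hμ0)
      · exact hne (h ▸ h2)
      · exact hne (hall i (mem_Icc.mpr h))


/-- Lemma on powers of pairwise independent linear forms: with the stated independence
conditions on `a₁,…,a_{2d+2} ∈ Kⁿ`, if `∑_{i=1}^{2d+2} λᵢ (aᵢᵀ x)^d = 0` with the `λᵢ`
not all zero, then `λ₁ ≠ 0` and `λ₂ ≠ 0`. -/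
theorem stmt12 (K : Type*) [Field K] [CharZero K] (n d : ℕ) (hd : 1 ≤ d)
    (a : ℕ → Fin n → K)
    (hpair : ∀ i ∈ Icc 1 (2 * d + 2), ∀ j ∈ Icc 1 (2 * d + 2), i ≠ j →
      LinearIndependent K ![a i, a j])
    (htriple : ∀ j ∈ Icc (min 3 (d ^ 2)) (2 * d + 2), ∀ k ∈ Icc 3 (d + 2),
      ((j = k ∨ j = k + d) → LinearIndependent K ![a k, a (k + d)]) ∧
      ((j ≠ k ∧ j ≠ k + d) → LinearIndependent K ![a j, a k, a (k + d)]))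
    (l : ℕ → K)
    (hsum : ∑ i ∈ Icc 1 (2 * d + 2), C (l i) * (∑ t, C (a i t) * X t) ^ d =
      (0 : MvPolynomial (Fin n) K))
    (hnz : ∃ i ∈ Icc 1 (2 * d + 2), l i ≠ 0) :
    l 1 ≠ 0 ∧ l 2 ≠ 0 :=
  stmt12' K n d hd a hpair htriple l hsum hnz
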